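/- The time-dependent velocity field vᵢ(x,t) = v⁰ᵢ(x)·exp(−3α²κt), where v⁰ is the phase-shifted trigonometric field with ξ₁=−π/3, ξ₂=π/3, ξ₃=π/2, satisfies the heat equation ∂vᵢ/∂t = κ Δvᵢ for all x ∈ ℝ³, t ∈ ℝ, and each i = 1,2,3. -/

import Mathlib

open Real

noncomputable def pd1 (f : ℝ → ℝ → ℝ → ℝ) : ℝ → ℝ → ℝ → ℝ :=
  fun x₁ x₂ x₃ => deriv (fun y => f y x₂ x₃) x₁

noncomputable def pd2 (f : ℝ → ℝ → ℝ → ℝ) : ℝ → ℝ → ℝ → ℝ :=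
  fun x₁ x₂ x₃ => deriv (fun y => f x₁ y x₃) x₂

noncomputable def pd3 (f : ℝ → ℝ → ℝ → ℝ) : ℝ → ℝ → ℝ → ℝ :=
  fun x₁ x₂ x₃ => deriv (fun y => f x₁ x₂ y) x₃

noncomputable def lap3 (f : ℝ → ℝ → ℝ → ℝ) : ℝ → ℝ → ℝ → ℝ :=
  fun x₁ x₂ x₃ => pd1 (pd1 f) x₁ x₂ x₃ + pd2 (pd2 f) x₁ x₂ x₃ + pd3 (pd3 f) x₁ x₂ x₃

/-- First component of the field with phases ξ₁ = -π/3, ξ₂ = π/3, ξ₃ = π/2. -/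
noncomputable def V1 (α x₁ x₂ x₃ : ℝ) : ℝ :=
  sin (α * x₁ - π/3) * cos (α * x₂ + π/3) * sin (α * x₃ + π/2)
    - sin (α * x₁ + π/3) * cos (α * x₃ - π/3) * sin (α * x₂ + π/2)

noncomputable def V2 (α x₁ x₂ x₃ : ℝ) : ℝ := V1 α x₂ x₃ x₁

noncomputable def V3 (α x₁ x₂ x₃ : ℝ) : ℝ := V1 α x₃ x₁ x₂

lemma hds (α c x : ℝ) : HasDerivAt (fun z => sin (α*z+c)) (α * cos (α*x+c)) x := by
  have h : HasDerivAt (fun z : ℝ => α*z+c) α x := by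
    simpa using ((hasDerivAt_id x).const_mul α).add_const c
  simpa [mul_comm] using h.sin

lemma hdc (α c x : ℝ) : HasDerivAt (fun z => cos (α*z+c)) (-(α * sin (α*x+c))) x := by
  have h : HasDerivAt (fun z : ℝ => α*z+c) α x := by
    simpa using ((hasDerivAt_id x).const_mul α).add_const c
  simpa [mul_comm] using h.cos

lemma key_ss (α c₁ c₂ P Q x : ℝ) :
    deriv (fun y => deriv (fun z => P * sin (α*z+c₁) + Q * sin (α*z+c₂)) y) x
      = -α^2 * (P * sin (α*x+c₁) + Q * sin (α*x+c₂)) := by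
  have inner : (fun y => deriv (fun z => P * sin (α*z+c₁) + Q * sin (α*z+c₂)) y)
      = fun y => (P*α) * cos (α*y+c₁) + (Q*α) * cos (α*y+c₂) := by
    funext y
    rw [(((hds α c₁ y).const_mul P).fun_add ((hds α c₂ y).const_mul Q)).deriv]
    ring
  rw [inner, (((hdc α c₁ x).const_mul (P*α)).fun_add ((hdc α c₂ x).const_mul (Q*α))).deriv]
  ring

lemma key_sc (α c₁ c₂ P Q x : ℝ) :
    deriv (fun y => deriv (fun z => P * sin (α*z+c₁) + Q * cos (α*z+c₂)) y) x
      = -α^2 * (P * sin (α*x+c₁) + Q * cos (α*x+c₂)) := by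
  have inner : (fun y => deriv (fun z => P * sin (α*z+c₁) + Q * cos (α*z+c₂)) y)
      = fun y => (P*α) * cos (α*y+c₁) + (-(Q*α)) * sin (α*y+c₂) := by
    funext y
    rw [(((hds α c₁ y).const_mul P).fun_add ((hdc α c₂ y).const_mul Q)).deriv]
    ring
  rw [inner, (((hdc α c₁ x).const_mul (P*α)).fun_add ((hds α c₂ x).const_mul (-(Q*α)))).deriv]
  ring

lemma d2_1 (α K b c x : ℝ) :
    deriv (fun y => deriv (fun z => V1 α z b c * K) y) x = -α^2 * (V1 α x b c * K) := by
  have e : (fun z => V1 α z b c * K)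
      = fun z => (cos (α*b+π/3) * sin (α*c+π/2) * K) * sin (α*z + -(π/3))
          + (-(cos (α*c-π/3) * sin (α*b+π/2) * K)) * sin (α*z + π/3) := by
    funext z
    rw [show α*z + -(π/3) = α*z - π/3 by ring]
    simp only [V1]; ring
  rw [e, key_ss, show α*x + -(π/3) = α*x - π/3 by ring]
  simp only [V1]; ring

lemma d2_2 (α K a c x : ℝ) :
    deriv (fun y => deriv (fun z => V1 α a z c * K) y) x = -α^2 * (V1 α a x c * K) := by
  have e : (fun z => V1 α a z c * K)
      = fun z => (-(sin (α*a+π/3) * cos (α*c-π/3) * K)) * sin (α*z + π/2)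
          + (sin (α*a-π/3) * sin (α*c+π/2) * K) * cos (α*z + π/3) := by
    funext z
    simp only [V1]; ring
  rw [e, key_sc]
  simp only [V1]; ring

lemma d2_3 (α K a b x : ℝ) :
    deriv (fun y => deriv (fun z => V1 α a b z * K) y) x = -α^2 * (V1 α a b x * K) := by
  have e : (fun z => V1 α a b z * K)
      = fun z => (sin (α*a-π/3) * cos (α*b+π/3) * K) * sin (α*z + π/2)
          + (-(sin (α*a+π/3) * sin (α*b+π/2) * K)) * cos (α*z + -(π/3)) := by
    funext z
    rw [show α*z + -(π/3) = α*z - π/3 by ring]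
    simp only [V1]; ring
  rw [e, key_sc, show α*x + -(π/3) = α*x - π/3 by ring]
  simp only [V1]; ring

lemma dtime (C k t : ℝ) : deriv (fun s => C * exp (k*s)) t = C * (exp (k*t) * k) := by
  have h : HasDerivAt (fun s : ℝ => k*s) k t := by simpa using (hasDerivAt_id t).const_mul k
  exact (h.exp.const_mul C).deriv

theorem heat_equation_solution (α κ : ℝ) (hκ : 0 < κ) (x₁ x₂ x₃ t : ℝ) :
    deriv (fun s => V1 α x₁ x₂ x₃ * exp (-3 * α ^ 2 * κ * s)) t
      = κ * lap3 (fun a b c => V1 α a b c * exp (-3 * α ^ 2 * κ * t)) x₁ x₂ x₃ ∧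
    deriv (fun s => V2 α x₁ x₂ x₃ * exp (-3 * α ^ 2 * κ * s)) t
      = κ * lap3 (fun a b c => V2 α a b c * exp (-3 * α ^ 2 * κ * t)) x₁ x₂ x₃ ∧
    deriv (fun s => V3 α x₁ x₂ x₃ * exp (-3 * α ^ 2 * κ * s)) t
      = κ * lap3 (fun a b c => V3 α a b c * exp (-3 * α ^ 2 * κ * t)) x₁ x₂ x₃ := by
  set K := exp (-3 * α ^ 2 * κ * t) with hK
  refine ⟨?_, ?_, ?_⟩
  · rw [dtime (V1 α x₁ x₂ x₃) (-3 * α ^ 2 * κ) t]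
    simp only [lap3, pd1, pd2, pd3, ← hK]
    rw [d2_1, d2_2, d2_3]
    ring
  · rw [dtime (V2 α x₁ x₂ x₃) (-3 * α ^ 2 * κ) t]
    simp only [lap3, pd1, pd2, pd3, V2, ← hK]
    rw [d2_3, d2_1, d2_2]
    ring
  · rw [dtime (V3 α x₁ x₂ x₃) (-3 * α ^ 2 * κ) t]
    simp only [lap3, pd1, pd2, pd3, V3, ← hK]
    rw [d2_2, d2_3, d2_1]
    ring
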